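/- Merging lower bound: Suppose a pseudo-distribution p on [k'] is obtained from a pseudo-distribution q on a finite set S by merging, i.e., there is a partition S_1,...,S_{k'} of S with p(i) = Σ_{j ∈ S_i} q(j), and each part satisfies |S_i| ≤ γ. Then H(p) ≥ H(q) − ‖q‖·log(γ). -/
import Mathlib


/-- Entropy of a single value, `H(u) = -u * log u` (natural logarithm). -/
noncomputable def Hf (u : ℝ) : ℝ := -u * Real.log u

lemma Hf_eq : Hf = Real.negMulLog := rfl

/-- Per-part bound: the entropy contribution of a part is at most
`Hf(sum) + sum * log card`. -/
lemma part_bound {S : Type*} (t : Finset S) (q : S → ℝ) (hq0 : ∀ j, 0 ≤ q j) :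
    ∑ j ∈ t, Hf (q j) ≤ Hf (∑ j ∈ t, q j) + (∑ j ∈ t, q j) * Real.log t.card := by
  rcases t.eq_empty_or_nonempty with rfl | ht
  · simp [Hf]
  have hn : (0 : ℝ) < t.card := by exact_mod_cast ht.card_pos
  have hjensen := Real.concaveOn_negMulLog.le_map_sum (t := t)
      (w := fun _ => (t.card : ℝ)⁻¹) (p := q)
      (fun i _ => by positivity)
      (by rw [Finset.sum_const, nsmul_eq_mul, mul_inv_cancel₀ hn.ne'])
      (fun i _ => hq0 i)
  simp only [smul_eq_mul, ← Finset.mul_sum] at hjensen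
  have hkey : Real.negMulLog ((t.card : ℝ)⁻¹ * ∑ j ∈ t, q j)
      = (t.card : ℝ)⁻¹ * (Real.negMulLog (∑ j ∈ t, q j)
          + (∑ j ∈ t, q j) * Real.log t.card) := by
    rw [mul_comm, Real.negMulLog_mul]
    have : Real.negMulLog (t.card : ℝ)⁻¹ = (t.card : ℝ)⁻¹ * Real.log t.card := by
      rw [Real.negMulLog, Real.log_inv]; ring
    rw [this]; ring
  rw [hkey] at hjensen
  rw [Hf_eq]
  calc ∑ j ∈ t, Real.negMulLog (q j)
      = (t.card : ℝ) * ((t.card : ℝ)⁻¹ * ∑ j ∈ t, Real.negMulLog (q j)) := by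
        field_simp
    _ ≤ (t.card : ℝ) * ((t.card : ℝ)⁻¹ * (Real.negMulLog (∑ j ∈ t, q j)
          + (∑ j ∈ t, q j) * Real.log t.card)) := by
        exact mul_le_mul_of_nonneg_left hjensen hn.le
    _ = _ := by field_simp

/-- Merging lower bound: if the pseudo-distribution `p` on `[k']` is obtained
from a pseudo-distribution `q` on a finite set `S` by merging along a partition
into fibers of a map `f : S → Fin k'` (i.e. `p i = ∑_{j : f j = i} q j`), and
each part has at most `γ` elements, then `H(p) ≥ H(q) - ‖q‖ * log γ`. -/
theorem merging_lower_bound {S : Type*} [Fintype S] (k' γ : ℕ)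
    (q : S → ℝ) (hq0 : ∀ j, 0 ≤ q j) (hq1 : ∀ j, q j ≤ 1)
    (f : S → Fin k')
    (hγ : ∀ i : Fin k', (Finset.univ.filter (fun j => f j = i)).card ≤ γ)
    (p : Fin k' → ℝ)
    (hp : ∀ i, p i = ∑ j ∈ Finset.univ.filter (fun j => f j = i), q j) :
    (∑ j, Hf (q j)) - (∑ j, q j) * Real.log γ ≤ ∑ i, Hf (p i) := by
  have hsplit : ∀ g : S → ℝ, (∑ j, g j)
      = ∑ i : Fin k', ∑ j ∈ Finset.univ.filter (fun j => f j = i), g j := by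
    intro g
    exact (Finset.sum_fiberwise Finset.univ f g).symm
  rw [sub_le_iff_le_add, hsplit (fun j => Hf (q j)), hsplit q]
  rw [Finset.sum_mul, ← Finset.sum_add_distrib]
  apply Finset.sum_le_sum
  intro i _
  set t := Finset.univ.filter (fun j => f j = i) with ht
  rcases t.eq_empty_or_nonempty with he | hne
  · rw [hp i, ← ht, he]; simp [Hf]
  have hs0 : 0 ≤ ∑ j ∈ t, q j := Finset.sum_nonneg fun j _ => hq0 j
  have hlog : Real.log t.card ≤ Real.log γ := by
    apply Real.log_le_log (by exact_mod_cast hne.card_pos)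
    exact_mod_cast hγ i
  calc ∑ j ∈ t, Hf (q j)
      ≤ Hf (∑ j ∈ t, q j) + (∑ j ∈ t, q j) * Real.log t.card :=
        part_bound t q hq0
    _ ≤ Hf (p i) + (∑ j ∈ t, q j) * Real.log γ := by
        rw [hp i]
        gcongr
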